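/- Let t ≥ 2 and ℒ a set of s nonnegative integers. If 𝒜 = {A_1,...,A_m} is a family of subsets of {1,...,n} such that |A_{i_1} ∩ ... ∩ A_{i_t}| ∈ ℒ for every choice of t distinct members, then m ≤ (t-1)·[C(n,s) + C(n,s-1) + ... + C(n,0)]. -/

import Mathlib

open Finset Submodule

namespace GSaux

variable {n : ℕ}

/-- multilinear monomial: indicator that `S ⊆ X`. -/
noncomputable def e (S : Finset (Fin n)) : Finset (Fin n) → ℚ :=
  fun X => if S ⊆ X then 1 else 0

/-- the polynomial attached to a set `A`. -/
noncomputable def F (L : Finset ℕ) (A : Finset (Fin n)) : Finset (Fin n) → ℚ :=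
  fun X => ∏ l ∈ L.filter (· < A.card), (((A ∩ X).card : ℚ) - (l : ℚ))

noncomputable def gens (n k : ℕ) : Finset (Finset (Fin n) → ℚ) :=
  ((univ : Finset (Finset (Fin n))).filter (fun S => S.card ≤ k)).image e

lemma e_mem_gens {S : Finset (Fin n)} {k : ℕ} (h : S.card ≤ k) : e S ∈ gens n k := by
  exact mem_image_of_mem _ (by simp [h])

lemma gens_mono {k k' : ℕ} (h : k ≤ k') : gens n k ⊆ gens n k' := by
  apply image_subset_image
  intro S hS
  simp only [mem_filter] at hS ⊢
  exact ⟨hS.1, hS.2.trans h⟩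

lemma mul_mem_span (A : Finset (Fin n)) (c : ℚ) (k : ℕ) (g : Finset (Fin n) → ℚ)
    (hg : g ∈ span ℚ (gens n k : Set (Finset (Fin n) → ℚ))) :
    (fun X => (((A ∩ X).card : ℚ) - c) * g X) ∈
      span ℚ (gens n (k + 1) : Set (Finset (Fin n) → ℚ)) := by
  induction hg using Submodule.span_induction with
  | mem x hx =>
      simp only [mem_coe, gens, Finset.mem_image, mem_filter] at hx
      obtain ⟨S, ⟨-, hS⟩, rfl⟩ := hx
      have hfun : (fun X => (((A ∩ X).card : ℚ) - c) * e S X)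
          = (∑ j ∈ A, e (insert j S)) - c • e S := by
        funext X
        simp only [Pi.sub_apply, Finset.sum_apply, Pi.smul_apply, smul_eq_mul, e]
        by_cases h : S ⊆ X
        · have h2 : A.filter (fun x => insert x S ⊆ X) = A ∩ X := by
            ext j
            simp [Finset.insert_subset_iff, h, Finset.mem_inter]
          have h3 : ∑ j ∈ A, (if insert j S ⊆ X then (1:ℚ) else 0)
              = ((A ∩ X).card : ℚ) := by
            rw [Finset.sum_boole, h2]
          rw [if_pos h, h3]
          ring
        · have h2 : ∀ j ∈ A, (if insert j S ⊆ X then (1:ℚ) else 0) = 0 := by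
            intro j _
            have : ¬ insert j S ⊆ X := fun hh => h ((subset_insert _ _).trans hh)
            simp [this]
          rw [if_neg h, Finset.sum_congr rfl h2]
          simp
      rw [hfun]
      refine sub_mem (sum_mem fun j _ => subset_span ?_) (smul_mem _ _ (subset_span ?_))
      · exact e_mem_gens ((card_insert_le _ _).trans (by omega))
      · exact e_mem_gens (hS.trans (by omega))
  | zero =>
      have : (fun X => (((A ∩ X).card : ℚ) - c) * (0 : Finset (Fin n) → ℚ) X) = 0 := by
        funext X; simp
      rw [this]; exact zero_mem _
  | add x y hx hy ihx ihy =>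
      have : (fun X => (((A ∩ X).card : ℚ) - c) * (x + y) X)
          = (fun X => (((A ∩ X).card : ℚ) - c) * x X)
            + fun X => (((A ∩ X).card : ℚ) - c) * y X := by
        funext X; simp [Pi.add_apply]; ring
      rw [this]; exact add_mem ihx ihy
  | smul a x hx ih =>
      have : (fun X => (((A ∩ X).card : ℚ) - c) * (a • x) X)
          = a • fun X => (((A ∩ X).card : ℚ) - c) * x X := by
        funext X; simp [Pi.smul_apply]; ring
      rw [this]; exact smul_mem _ _ ih

lemma prod_mem_span (A : Finset (Fin n)) (P : Finset ℕ) :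
    (fun X => ∏ l ∈ P, (((A ∩ X).card : ℚ) - (l : ℚ))) ∈
      span ℚ (gens n P.card : Set (Finset (Fin n) → ℚ)) := by
  induction P using Finset.induction_on with
  | empty =>
      have : (fun (X : Finset (Fin n)) => ∏ l ∈ (∅ : Finset ℕ), (((A ∩ X).card : ℚ) - (l:ℚ)))
          = e (∅ : Finset (Fin n)) := by
        funext X; simp [e]
      rw [this]
      exact subset_span (e_mem_gens (by simp))
  | @insert a P ha ih =>
      have hcard : (insert a P).card = P.card + 1 := card_insert_of_notMem ha
      have : (fun X => ∏ l ∈ insert a P, (((A ∩ X).card : ℚ) - (l:ℚ)))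
          = fun X => (((A ∩ X).card : ℚ) - (a:ℚ)) *
              ∏ l ∈ P, (((A ∩ X).card : ℚ) - (l:ℚ)) := by
        funext X; rw [Finset.prod_insert ha]
      rw [this, hcard]
      exact mul_mem_span A a P.card _ ih

lemma F_mem_span (L : Finset ℕ) (s : ℕ) (hL : L.card = s) (A : Finset (Fin n)) :
    F L A ∈ span ℚ (gens n s : Set (Finset (Fin n) → ℚ)) := by
  have h1 := prod_mem_span A (L.filter (· < A.card))
  have h2 : (L.filter (· < A.card)).card ≤ s := hL ▸ card_filter_le _ _
  exact span_mono (by exact_mod_cast gens_mono h2) h1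

lemma F_self_ne_zero (L : Finset ℕ) (A : Finset (Fin n)) : F L A A ≠ 0 := by
  unfold F
  rw [Finset.inter_self]
  rw [Finset.prod_ne_zero_iff]
  intro l hl
  simp only [mem_filter] at hl
  have : (l : ℚ) < (A.card : ℚ) := by exact_mod_cast hl.2
  exact sub_ne_zero_of_ne (by linarith)

lemma F_eq_zero {L : Finset ℕ} {A X : Finset (Fin n)}
    (h1 : (A ∩ X).card ∈ L) (h2 : (A ∩ X).card < A.card) : F L A X = 0 :=
  Finset.prod_eq_zero (Finset.mem_filter.mpr ⟨h1, by simpa using h2⟩) (by simp)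

lemma of_F_eq_zero {L : Finset ℕ} {A X : Finset (Fin n)} (h : F L A X = 0) :
    (A ∩ X).card ∈ L ∧ (A ∩ X).card < A.card := by
  obtain ⟨l, hl, hl0⟩ := Finset.prod_eq_zero_iff.mp h
  simp only [mem_filter] at hl
  have : ((A ∩ X).card : ℚ) = (l : ℚ) := by linarith [sub_eq_zero.mp hl0]
  have hc : (A ∩ X).card = l := by exact_mod_cast this
  exact ⟨hc ▸ hl.1, hc ▸ hl.2⟩

lemma eval_zero_of_mem_span {L : Finset ℕ} {T : Finset (Finset (Fin n))}
    {g : Finset (Fin n) → ℚ}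
    (hg : g ∈ span ℚ ((T.image (F L)) : Set (Finset (Fin n) → ℚ)))
    (y : Finset (Fin n)) (hz : ∀ B ∈ T, F L B y = 0) : g y = 0 := by
  induction hg using Submodule.span_induction with
  | mem x hx =>
      simp only [mem_coe, Finset.mem_image] at hx
      obtain ⟨B, hB, rfl⟩ := hx
      exact hz B hB
  | zero => rfl
  | add x y' hx hy ihx ihy => simp [Pi.add_apply, ihx, ihy]
  | smul a x hx ih => simp [Pi.smul_apply, ih]

/-- Greedy extraction lemma. -/
lemma greedy {α V : Type*} [DecidableEq α] [DecidableEq V] [AddCommGroup V] [Module ℚ V]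
    [FiniteDimensional ℚ V]
    (f : α → V) (size : α → ℕ) (W : Submodule ℚ V) (D τ : ℕ)
    (hWD : Module.finrank ℚ W ≤ D)
    (𝒜 : Finset α) (hf : ∀ a ∈ 𝒜, f a ∈ W) (hbig : τ * D < 𝒜.card) :
    ∃ a ∈ 𝒜, ∃ J : ℕ → Finset α,
      (∀ k < τ, J k ⊆ 𝒜) ∧
      (∀ k < τ, ∀ b ∈ J k, size a ≤ size b ∧ b ≠ a) ∧
      (∀ k < τ, ∀ k' < τ, k ≠ k' → Disjoint (J k) (J k')) ∧
      (∀ k < τ, f a ∈ span ℚ (((J k).image f) : Set V)) := by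
  suffices H : ∀ N (R : Finset α) (J : ℕ → Finset α), R.card = N → R ⊆ 𝒜 →
      (∀ k < τ, J k ⊆ 𝒜) →
      (∀ k < τ, Disjoint (J k) R) →
      (∀ k < τ, ∀ k' < τ, k ≠ k' → Disjoint (J k) (J k')) →
      (∀ k < τ, ∀ b ∈ J k, ∀ c ∈ R, size c ≤ size b) →
      (∀ k < τ, (J k).card ≤ Module.finrank ℚ (span ℚ (((J k).image f) : Set V))) →
      (τ * D < R.card + ∑ k ∈ range τ, (J k).card) →
      ∃ a ∈ 𝒜, ∃ J : ℕ → Finset α,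
        (∀ k < τ, J k ⊆ 𝒜) ∧
        (∀ k < τ, ∀ b ∈ J k, size a ≤ size b ∧ b ≠ a) ∧
        (∀ k < τ, ∀ k' < τ, k ≠ k' → Disjoint (J k) (J k')) ∧
        (∀ k < τ, f a ∈ span ℚ (((J k).image f) : Set V)) by
    exact H 𝒜.card 𝒜 (fun _ => ∅) rfl Finset.Subset.rfl
      (fun _ _ => empty_subset _) (fun _ _ => disjoint_empty_left _)
      (fun _ _ _ _ _ => disjoint_empty_left _) (by simp) (by simp) (by simpa using hbig)
  intro N
  induction N with
  | zero =>
      intro R J hRcard hRsub hJsub hJR hJJ hsize hrank hbig'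
      exfalso
      have hle : ∀ k ∈ range τ, (J k).card ≤ D := by
        intro k hk
        rw [mem_range] at hk
        refine (hrank k hk).trans (le_trans ?_ hWD)
        have hsub : ((J k).image f : Set V) ⊆ (W : Set V) := by
          intro x hx
          simp only [coe_image, Set.mem_image, mem_coe] at hx
          obtain ⟨b, hb, rfl⟩ := hx
          exact hf b (hJsub k hk hb)
        exact Submodule.finrank_mono (span_le.mpr hsub)
      have := Finset.sum_le_sum hle
      simp only [Finset.sum_const, card_range, smul_eq_mul] at this
      omega
  | succ N ih =>
      intro R J hRcard hRsub hJsub hJR hJJ hsize hrank hbig'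
      have hRne : R.Nonempty := by
        rw [← Finset.card_pos, hRcard]; omega
      obtain ⟨a, haR, hamax⟩ := Finset.exists_max_image R size hRne
      by_cases hc : ∀ k < τ, f a ∈ span ℚ (((J k).image f) : Set V)
      · refine ⟨a, hRsub haR, J, hJsub, ?_, hJJ, hc⟩
        intro k hk b hb
        refine ⟨hsize k hk b hb a haR, ?_⟩
        rintro rfl
        exact (Finset.disjoint_left.mp (hJR k hk)) hb haR
      · push_neg at hc
        obtain ⟨k, hk, hfa⟩ := hc
        have hanotJ : a ∉ J k := fun h => (Finset.disjoint_left.mp (hJR k hk)) h haR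
        refine ih (R.erase a) (Function.update J k (insert a (J k))) ?_ ?_ ?_ ?_ ?_ ?_ ?_ ?_
        · rw [Finset.card_erase_of_mem haR, hRcard]
          omega
        · exact (Finset.erase_subset _ _).trans hRsub
        · intro k' hk'
          by_cases h : k' = k
          · subst h
            rw [Function.update_self]
            exact Finset.insert_subset (hRsub haR) (hJsub k' hk')
          · rw [Function.update_of_ne h]
            exact hJsub k' hk'
        · intro k' hk'
          by_cases h : k' = k
          · subst h
            rw [Function.update_self]
            rw [Finset.disjoint_insert_left]
            exact ⟨Finset.notMem_erase _ _,
              Finset.disjoint_of_subset_right (erase_subset _ _) (hJR k' hk')⟩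
          · rw [Function.update_of_ne h]
            exact Finset.disjoint_of_subset_right (erase_subset _ _) (hJR k' hk')
        · intro k1 hk1 k2 hk2 hne
          have hnotmem : ∀ k' < τ, k' ≠ k → a ∉ J k' := fun k' hk' _ h =>
            (Finset.disjoint_left.mp (hJR k' hk')) h haR
          by_cases h1 : k1 = k
          · subst h1
            rw [Function.update_self, Function.update_of_ne (Ne.symm hne)]
            rw [Finset.disjoint_insert_left]
            exact ⟨hnotmem k2 hk2 (Ne.symm hne), hJJ k1 hk1 k2 hk2 hne⟩
          · rw [Function.update_of_ne h1]
            by_cases h2 : k2 = k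
            · subst h2
              rw [Function.update_self, Finset.disjoint_insert_right]
              exact ⟨hnotmem k1 hk1 h1, hJJ k1 hk1 k2 hk2 hne⟩
            · rw [Function.update_of_ne h2]
              exact hJJ k1 hk1 k2 hk2 hne
        · intro k' hk' b hb c hc'
          have hcR : c ∈ R := (erase_subset _ _) hc'
          by_cases h : k' = k
          · subst h
            rw [Function.update_self] at hb
            rcases Finset.mem_insert.mp hb with rfl | hb'
            · exact hamax c hcR
            · exact hsize k' hk' b hb' c hcR
          · rw [Function.update_of_ne h] at hb
            exact hsize k' hk' b hb c hcR
        · intro k' hk'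
          by_cases h : k' = k
          · subst h
            rw [Function.update_self]
            rw [Finset.card_insert_of_notMem hanotJ, Finset.image_insert]
            have hlt : span ℚ (((J k').image f) : Set V)
                < span ℚ ((↑(insert (f a) ((J k').image f)) : Set V)) := by
              refine lt_of_le_of_ne (span_mono ?_) ?_
              · exact_mod_cast Finset.subset_insert _ _
              · intro h
                apply hfa
                rw [h]
                exact subset_span (by simp)
            have := Submodule.finrank_lt_finrank_of_lt hlt
            have h1 := hrank k' hk'
            omega
          · rw [Function.update_of_ne h]
            exact hrank k' hk'
        · have hsum : ∑ k' ∈ range τ, (Function.update J k (insert a (J k)) k').card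
              = (∑ k' ∈ range τ, (J k').card) + 1 := by
            have hfun : ∀ k', (Function.update J k (insert a (J k)) k').card
                = Function.update (fun k'' => (J k'').card) k ((J k).card + 1) k' := by
              intro k'
              by_cases h : k' = k
              · subst h; simp [Finset.card_insert_of_notMem hanotJ]
              · simp [Function.update_of_ne h]
            rw [Finset.sum_congr rfl (fun k' _ => hfun k'),
              Finset.sum_update_of_mem (mem_range.mpr hk), Finset.sdiff_singleton_eq_erase]
            have e2 := Finset.add_sum_erase (range τ) (fun k'' => (J k'').card)
              (mem_range.mpr hk)
            omega
          rw [hsum, Finset.card_erase_of_mem haR, hRcard]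
          omega

end GSaux

namespace GSaux

lemma card_filter_card_le (n s : ℕ) :
    ((univ : Finset (Finset (Fin n))).filter (fun S => S.card ≤ s)).card
      = ∑ i ∈ range (s + 1), n.choose i := by
  rw [Finset.card_eq_sum_card_fiberwise (f := Finset.card) (t := range (s + 1))
    (fun S hS => by simp only [mem_coe, mem_filter] at hS; simp only [mem_coe, mem_range]; omega)]
  refine Finset.sum_congr rfl fun i hi => ?_
  rw [mem_range] at hi
  have hset : (((univ : Finset (Finset (Fin n))).filter (fun S => S.card ≤ s)).filter
      (fun S => S.card = i)) = Finset.powersetCard i univ := by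
    ext S
    simp only [mem_filter, mem_univ, true_and, Finset.mem_powersetCard, subset_univ]
    omega
  rw [hset, Finset.card_powersetCard, card_univ, Fintype.card_fin]

lemma finrank_gens_le (n s : ℕ) :
    Module.finrank ℚ (span ℚ (gens n s : Set (Finset (Fin n) → ℚ)))
      ≤ ∑ i ∈ range (s + 1), n.choose i := by
  refine le_trans (finrank_span_finset_le_card (gens n s)) ?_
  rw [← card_filter_card_le n s]
  exact Finset.card_image_le

end GSaux

theorem grolmusz_sudakov (n s t : ℕ) (ht : 2 ≤ t) (L : Finset ℕ) (hL : L.card = s)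
    (𝒜 : Finset (Finset (Fin n)))
    (hintersecting : ∀ 𝒯 ⊆ 𝒜, 𝒯.card = t → (𝒯.inf id).card ∈ L) :
    𝒜.card ≤ (t - 1) * ∑ i ∈ Finset.range (s + 1), n.choose i := by
  classical
  by_contra hbig
  push_neg at hbig
  set τ := t - 1 with hτdef
  have hτ : 1 ≤ τ := by omega
  set D := ∑ i ∈ Finset.range (s + 1), n.choose i with hD
  obtain ⟨A, hA𝒜, J, hJsub, hJsize, hJdisj, hJspan⟩ :=
    GSaux.greedy (GSaux.F L) Finset.card
      (span ℚ (GSaux.gens n s : Set (Finset (Fin n) → ℚ))) D τ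
      (GSaux.finrank_gens_le n s) 𝒜 (fun B _ => GSaux.F_mem_span L s hL B) hbig
  -- each J k is nonempty
  have hne : ∀ k < τ, (J k).Nonempty := by
    intro k hk
    rw [Finset.nonempty_iff_ne_empty]
    intro hemp
    have h0 := hJspan k hk
    rw [hemp] at h0
    simp only [Finset.image_empty, Finset.coe_empty, Submodule.span_empty,
      Submodule.mem_bot] at h0
    exact GSaux.F_self_ne_zero L A (by rw [h0]; rfl)
  -- a choice of an element of each J k
  set j : ℕ → Finset (Fin n) := fun i => if h : (J i).Nonempty then h.choose else ∅ with hjdef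
  have hj : ∀ i < τ, j i ∈ J i := by
    intro i hi
    simp only [hjdef, dif_pos (hne i hi)]
    exact (hne i hi).choose_spec
  -- Q 0
  have hQ0 : ∀ b : ℕ → Finset (Fin n), (∀ i < τ, b i ∈ J i) →
      (A ∩ (Finset.Ico 0 τ).inf b).card ∈ L := by
    intro b hb
    have hinj : Set.InjOn b (range τ) := by
      intro i hi i' hi' hbe
      by_contra hne'
      rw [mem_coe, mem_range] at hi hi'
      have hd := hJdisj i hi i' hi' hne'
      exact (Finset.disjoint_left.mp hd) (hb i hi) (hbe ▸ hb i' hi')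
    have hAnot : A ∉ (range τ).image b := by
      rw [Finset.mem_image]
      rintro ⟨i, hi, rfl⟩
      exact (hJsize i (mem_range.mp hi) (b i) (hb i (mem_range.mp hi))).2 rfl
    have hcard : (insert A ((range τ).image b)).card = t := by
      rw [Finset.card_insert_of_notMem hAnot, Finset.card_image_of_injOn hinj,
        card_range]
      omega
    have hsub : insert A ((range τ).image b) ⊆ 𝒜 := by
      refine Finset.insert_subset hA𝒜 ?_
      intro x hx
      rw [Finset.mem_image] at hx
      obtain ⟨i, hi, rfl⟩ := hx
      exact hJsub i (mem_range.mp hi) (hb i (mem_range.mp hi))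
    have := hintersecting _ hsub hcard
    rwa [Finset.inf_insert, Finset.inf_image, Function.id_comp, id_eq,
      Finset.inf_eq_inter, Finset.range_eq_Ico] at this
  -- the inductive step
  have hstep : ∀ d, d + 1 ≤ τ →
      (∀ b : ℕ → Finset (Fin n), (∀ i < τ, b i ∈ J i) →
        (A ∩ (Finset.Ico d τ).inf b).card ∈ L) →
      ∀ b : ℕ → Finset (Fin n), (∀ i < τ, b i ∈ J i) →
        GSaux.F L A (A ∩ (Finset.Ico (d + 1) τ).inf b) = 0 := by
    intro d hd hQ b hb
    refine GSaux.eval_zero_of_mem_span (hJspan d (by omega)) _ ?_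
    intro B hB
    set y := A ∩ (Finset.Ico (d + 1) τ).inf b with hy
    have hb' : ∀ i < τ, Function.update b d B i ∈ J i := by
      intro i hi
      by_cases h : i = d
      · subst h; rw [Function.update_self]; exact hB
      · rw [Function.update_of_ne h]; exact hb i hi
    have hkey : B ∩ y = A ∩ (Finset.Ico d τ).inf (Function.update b d B) := by
      rw [show Finset.Ico d τ = insert d (Finset.Ico (d + 1) τ) from
        (Finset.insert_Ico_add_one_left_eq_Ico (by omega)).symm, Finset.inf_insert,
        Function.update_self]
      have hsame : (Finset.Ico (d + 1) τ).inf (Function.update b d B)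
          = (Finset.Ico (d + 1) τ).inf b := by
        refine Finset.inf_congr rfl fun i hi => ?_
        rw [Finset.mem_Ico] at hi
        exact Function.update_of_ne (by omega) _ _
      rw [hsame, hy, Finset.inf_eq_inter]
      ext x
      simp only [Finset.mem_inter]
      tauto
    have hmem := hQ (Function.update b d B) hb'
    rw [← hkey] at hmem
    refine GSaux.F_eq_zero hmem ?_
    -- (B ∩ y).card < B.card
    by_contra hge
    push_neg at hge
    have hBy : B ∩ y = B :=
      Finset.eq_of_subset_of_card_le Finset.inter_subset_left hge
    have hBA : B ⊆ A := by
      intro x hx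
      have : x ∈ B ∩ y := by rw [hBy]; exact hx
      exact Finset.inter_subset_left (Finset.mem_of_mem_inter_right this)
    have hcardle := hJsize d (by omega) B hB
    exact hcardle.2 (Finset.eq_of_subset_of_card_le hBA hcardle.1)
  -- the chain
  have hQ : ∀ d, d ≤ τ - 1 →
      ∀ b : ℕ → Finset (Fin n), (∀ i < τ, b i ∈ J i) →
        (A ∩ (Finset.Ico d τ).inf b).card ∈ L := by
    intro d
    induction d with
    | zero => exact fun _ => hQ0
    | succ d ihd =>
        intro hd b hb
        have h0 := hstep d (by omega) (ihd (by omega)) b hb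
        have h1 := (GSaux.of_F_eq_zero h0).1
        rwa [← Finset.inter_assoc, Finset.inter_self] at h1
  -- final contradiction
  have hfin := hstep (τ - 1) (by omega) (hQ (τ - 1) le_rfl) j hj
  rw [show τ - 1 + 1 = τ by omega, Finset.Ico_self, Finset.inf_empty] at hfin
  have htop : A ∩ (⊤ : Finset (Fin n)) = A := by
    simp [Finset.top_eq_univ]
  rw [htop] at hfin
  exact GSaux.F_self_ne_zero L A hfin
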